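/- Let 𝒳 ⊆ ℝ^d, let MaxAff(x) = max_{i∈[N]}(a_iᵀx + b_i) be a max-affine function with N ≥ n components, and let Δ > 0. For x ∈ ℝ^d admitting a unique index j(x) ∈ [N] with a_{j(x)}ᵀx + b_{j(x)} ≥ a_jᵀx + b_j + Δ for all j ≠ j(x), let E(x) ∈ ℝ^N be the one-hot vector with 1 in position j(x). Then for every ε > 0 there exist a sum-of-linear-transformations layer Linear : ℝ^{d×n} → ℝ^{(d+N)×N} and matrices W_K, W_Q (of suitable dimensions) and W_O ∈ ℝ^{N×n} such that for every X = [X_1,…,X_n] ∈ ℝ^{d×n} whose columns all lie in 𝒳 and all satisfy the Δ-margin condition above, ‖Softmax((W_K·Linear(X))ᵀ · W_Q·Linear(X)) · W_O − [E(X_1), E(X_2), …, E(X_n)]‖_∞ ≤ ε. -/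

import Mathlib

open Matrix

/-- Column-wise softmax of a real matrix. -/
noncomputable def softmax {a b : ℕ} (M : Matrix (Fin a) (Fin b) ℝ) :
    Matrix (Fin a) (Fin b) ℝ :=
  Matrix.of fun i j => Real.exp (M i j) / ∑ k, Real.exp (M k j)

/-- **Attention approximates the indicator of a max-affine partition.**
Given a max-affine function with `N ≥ n` components on `𝒳 ⊆ ℝ^d` and a margin `Δ > 0`,
for every `ε > 0` there are a sum-of-linear-transformations layer
`Linear : ℝ^{d×n} → ℝ^{(d+N)×N}` (given by `Z ↦ ∑ i, P i * Z * Q i + Rb`),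
matrices `W_K, W_Q` (of suitable dimensions) and `W_O ∈ ℝ^{N×n}`
such that for every input `X ∈ ℝ^{d×n}` whose columns lie in `𝒳` and each admit a
(unique) index `jx c` whose affine component exceeds all others by at least `Δ`,
the matrix `Softmax((W_K·Linear(X))ᵀ·(W_Q·Linear(X)))·W_O` is entrywise within `ε`
of the one-hot indicator matrix `[E(X_1), …, E(X_n)]`. -/
lemma softmax_key {N : ℕ} (ε Δ lam : ℝ)
    (hlam : 0 ≤ lam) (hexp : Real.exp (-(lam*Δ)) * N ≤ ε)
    (s : Fin N → ℝ) (j0 : Fin N) (hm : ∀ r, r ≠ j0 → s r + Δ ≤ s j0)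
    (r : Fin N) :
    |Real.exp (lam * s r) / (∑ k, Real.exp (lam * s k)) - (if r = j0 then 1 else 0)| ≤ ε := by
  have hN1 : (1:ℝ) ≤ N := by
    have : 0 < N := Fin.pos j0
    exact_mod_cast this
  set e0 := Real.exp (lam * s j0) with he0
  have he0pos : 0 < e0 := Real.exp_pos _
  set D := ∑ k, Real.exp (lam * s k) with hD
  have hDpos : 0 < D := Finset.sum_pos (fun k _ => Real.exp_pos _) ⟨j0, Finset.mem_univ _⟩
  have hterm : ∀ k : Fin N, k ≠ j0 → Real.exp (lam * s k) ≤ Real.exp (-(lam*Δ)) * e0 := by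
    intro k hk
    rw [he0, ← Real.exp_add]
    apply Real.exp_le_exp.2
    nlinarith [mul_le_mul_of_nonneg_left (hm k hk) hlam]
  have he0D : e0 ≤ D := by
    exact Finset.single_le_sum (f := fun k => Real.exp (lam * s k))
      (fun k _ => (Real.exp_pos _).le) (Finset.mem_univ j0)
  by_cases hr : r = j0
  · subst hr
    simp only [if_pos rfl, eq_self_iff_true, if_true]
    have hx1 : Real.exp (lam * s r) / D ≤ 1 := by
      rw [div_le_one hDpos]; exact he0D
    rw [abs_sub_comm, abs_of_nonneg (by linarith)]
    have hsum : D - e0 ≤ Real.exp (-(lam*Δ)) * e0 * N := by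
      have : D - e0 = ∑ k ∈ Finset.univ.erase r, Real.exp (lam * s k) := by
        rw [hD, ← Finset.sum_erase_add _ _ (Finset.mem_univ r)]; ring
      rw [this]
      calc ∑ k ∈ Finset.univ.erase r, Real.exp (lam * s k)
          ≤ ∑ _k ∈ Finset.univ.erase r, Real.exp (-(lam*Δ)) * e0 :=
            Finset.sum_le_sum (fun k hk => hterm k (Finset.mem_erase.1 hk).1)
        _ = (Finset.univ.erase r).card * (Real.exp (-(lam*Δ)) * e0) := by
            rw [Finset.sum_const, nsmul_eq_mul]
        _ ≤ N * (Real.exp (-(lam*Δ)) * e0) := by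
            apply mul_le_mul_of_nonneg_right _ (by positivity)
            have := Finset.card_erase_le (a := r) (s := (Finset.univ : Finset (Fin N)))
            have : ((Finset.univ.erase r).card : ℝ) ≤ (Finset.univ : Finset (Fin N)).card := by
              exact_mod_cast this
            simpa using this
        _ = Real.exp (-(lam*Δ)) * e0 * N := by ring
    have h2 : 1 - Real.exp (lam * s r) / D = (D - e0) / D := by
      field_simp
      rfl
    rw [h2]
    have h0 : 0 ≤ D - e0 := by linarith
    calc (D - e0)/D ≤ (D - e0)/e0 := by gcongr
      _ ≤ (Real.exp (-(lam*Δ)) * e0 * N) / e0 := by gcongr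
      _ = Real.exp (-(lam*Δ)) * N := by field_simp
      _ ≤ ε := hexp
  · simp only [if_neg hr]
    rw [sub_zero, abs_of_nonneg (by positivity)]
    calc Real.exp (lam * s r) / D ≤ (Real.exp (-(lam*Δ)) * e0) / e0 := by
          apply div_le_div₀ (by positivity) (hterm r hr) he0pos he0D
      _ = Real.exp (-(lam*Δ)) := by field_simp
      _ ≤ Real.exp (-(lam*Δ)) * N := le_mul_of_one_le_right (by positivity) hN1
      _ ≤ ε := hexp

theorem attention_approximates_maxaffine_indicator
    (d n N : ℕ) (hd : 0 < d) (hn : 0 < n) (hNn : n ≤ N)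
    (X : Set (Fin d → ℝ))
    (a : Fin N → Fin d → ℝ) (b : Fin N → ℝ)
    (Δ : ℝ) (hΔ : 0 < Δ) (ε : ℝ) (hε : 0 < ε) :
    ∃ (H : ℕ) (P : Fin H → Matrix (Fin (d + N)) (Fin d) ℝ)
      (Q : Fin H → Matrix (Fin n) (Fin N) ℝ)
      (Rb : Matrix (Fin (d + N)) (Fin N) ℝ)
      (dA : ℕ) (WK WQ : Matrix (Fin dA) (Fin (d + N)) ℝ)
      (WO : Matrix (Fin N) (Fin n) ℝ),
      ∀ (Xm : Matrix (Fin d) (Fin n) ℝ) (jx : Fin n → Fin N),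
        (∀ c : Fin n, (fun r => Xm r c) ∈ X) →
        (∀ c : Fin n, ∀ j : Fin N, j ≠ jx c →
          (∑ t, a (jx c) t * Xm t c) + b (jx c) ≥ ((∑ t, a j t * Xm t c) + b j) + Δ) →
        ∀ (r : Fin N) (c : Fin n),
          |(softmax ((WK * (∑ i, P i * Xm * Q i + Rb))ᵀ *
              (WQ * (∑ i, P i * Xm * Q i + Rb))) * WO) r c
            - (if r = jx c then (1 : ℝ) else 0)| ≤ ε := by
  classical
  -- scaling parameter
  set lam : ℝ := max (Real.log ((N:ℝ)/ε) / Δ) 0 with hlamdef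
  have hlam : 0 ≤ lam := le_max_right _ _
  have hN0 : 0 < N := lt_of_lt_of_le hn hNn
  have hexp : Real.exp (-(lam*Δ)) * N ≤ ε := by
    have hlog : Real.log ((N:ℝ)/ε) ≤ lam * Δ := by
      calc Real.log ((N:ℝ)/ε) = (Real.log ((N:ℝ)/ε) / Δ) * Δ := by field_simp
        _ ≤ lam * Δ := by gcongr; exact le_max_left _ _
    have h1 : Real.exp (-(lam*Δ)) ≤ Real.exp (-(Real.log ((N:ℝ)/ε))) := by
      apply Real.exp_le_exp.2; linarith
    have hNpos : (0:ℝ) < (N:ℝ)/ε := by positivity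
    have h2 : Real.exp (-(Real.log ((N:ℝ)/ε))) = ε / N := by
      rw [Real.exp_neg, Real.exp_log hNpos]
      field_simp
    have hNR : (0:ℝ) < (N:ℝ) := by exact_mod_cast hN0
    calc Real.exp (-(lam*Δ)) * N ≤ (ε / N) * N := by
          apply mul_le_mul_of_nonneg_right _ hNR.le
          rw [← h2]; exact h1
      _ = ε := by field_simp
  -- the embedding of columns into components
  set emb : Fin n → Fin N := Fin.castLE hNn with hembdef
  have hembinj : Function.Injective emb := Fin.castLE_injective hNn
  -- the matrices
  refine ⟨1,
    (fun _ => Matrix.of (Fin.addCases (fun t t' => if t = t' then (1:ℝ) else 0) (fun _ _ => 0))),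
    (fun _ => Matrix.of fun u j => if j = emb u then (1:ℝ) else 0),
    Matrix.of (Fin.addCases (fun _ _ => (0:ℝ)) (fun u j => if u = j then 1 else 0)),
    d + 1,
    Matrix.of (fun p => Fin.addCases (fun _ => (0:ℝ))
      (fun u => Fin.addCases (fun p' => lam * a u p') (fun _ => lam * b u) p)),
    Matrix.of (fun p => Fin.addCases
      (fun q' => Fin.addCases (fun p' => if p' = q' then (1:ℝ) else 0) (fun _ => 0) p)
      (fun _ => Fin.addCases (fun _ => (0:ℝ)) (fun _ => 1) p)),
    Matrix.of (fun k c => if k = emb c then (1:ℝ) else 0),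
    ?_⟩
  intro Xm jx _hX hmargin r c
  set L : Matrix (Fin (d+N)) (Fin N) ℝ :=
    (∑ i : Fin 1,
      (Matrix.of (Fin.addCases (fun t t' => if t = t' then (1:ℝ) else 0) (fun _ _ => 0)) :
        Matrix (Fin (d+N)) (Fin d) ℝ) * Xm *
        Matrix.of fun u j => if j = emb u then (1:ℝ) else 0) +
      Matrix.of (Fin.addCases (fun _ _ => (0:ℝ)) (fun u j => if u = j then 1 else 0)) with hLdef
  -- entries of L
  have hLtop : ∀ (t : Fin d) (cc : Fin n), L (Fin.castAdd N t) (emb cc) = Xm t cc := by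
    intro t cc
    rw [hLdef]
    simp only [Fin.sum_univ_one, Matrix.add_apply, Matrix.mul_apply, Matrix.of_apply,
      Fin.addCases_left, ite_mul, one_mul, zero_mul, Finset.sum_ite_eq, Finset.mem_univ,
      if_true, hembinj.eq_iff, mul_ite, mul_one, mul_zero, Finset.sum_ite_eq', add_zero]
  have hLbot : ∀ (u : Fin N) (j : Fin N), L (Fin.natAdd d u) j = if u = j then 1 else 0 := by
    intro u j
    rw [hLdef]
    simp only [Fin.sum_univ_one, Matrix.add_apply, Matrix.mul_apply, Matrix.of_apply,
      Fin.addCases_right, zero_mul, Finset.sum_const_zero, zero_add]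
  set WKm : Matrix (Fin (d+1)) (Fin (d+N)) ℝ :=
    Matrix.of (fun p => Fin.addCases (fun _ => (0:ℝ))
      (fun u => Fin.addCases (fun p' => lam * a u p') (fun _ => lam * b u) p)) with hWK
  set WQm : Matrix (Fin (d+1)) (Fin (d+N)) ℝ :=
    Matrix.of (fun p => Fin.addCases
      (fun q' => Fin.addCases (fun p' => if p' = q' then (1:ℝ) else 0) (fun _ => 0) p)
      (fun _ => Fin.addCases (fun _ => (0:ℝ)) (fun _ => 1) p)) with hWQ
  have hKL : ∀ (p : Fin (d+1)) (r' : Fin N), (WKm * L) p r' =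
      Fin.addCases (fun p' => lam * a r' p') (fun _ => lam * b r') p := by
    intro p r'
    rw [Matrix.mul_apply, Fin.sum_univ_add]
    simp only [hWK, Matrix.of_apply, Fin.addCases_left, Fin.addCases_right, zero_mul,
      Finset.sum_const_zero, zero_add, hLbot, mul_ite, mul_one, mul_zero,
      Finset.sum_ite_eq', Finset.mem_univ, if_true]
  have hQL : ∀ (p : Fin (d+1)), (WQm * L) p (emb c) =
      Fin.addCases (fun p' => Xm p' c) (fun _ => (1:ℝ)) p := by
    intro p
    rw [Matrix.mul_apply, Fin.sum_univ_add]
    induction p using Fin.addCases with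
    | left p' =>
      simp only [hWQ, Matrix.of_apply, Fin.addCases_left, Fin.addCases_right, zero_mul,
        Finset.sum_const_zero, add_zero, hLtop, hLbot, ite_mul, one_mul,
        Finset.sum_ite_eq, Finset.mem_univ, if_true]
    | right p1 =>
      simp only [hWQ, Matrix.of_apply, Fin.addCases_left, Fin.addCases_right, zero_mul,
        Finset.sum_const_zero, zero_add, hLbot, one_mul,
        Finset.sum_ite_eq', Finset.mem_univ, if_true]
  have hA : ∀ r' : Fin N, ((WKm * L)ᵀ * (WQm * L)) r' (emb c) =
      lam * ((∑ t, a r' t * Xm t c) + b r') := by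
    intro r'
    rw [Matrix.mul_apply]
    simp only [Matrix.transpose_apply, hKL, hQL]
    rw [Fin.sum_univ_add]
    simp only [Fin.addCases_left, Fin.addCases_right, Fin.sum_univ_one, mul_one]
    rw [mul_add, Finset.mul_sum]
    congr 1
    · exact Finset.sum_congr rfl (fun t _ => by ring)
  -- the final computation
  have hout : (softmax ((WKm * L)ᵀ * (WQm * L)) *
      Matrix.of (fun k cc => if k = emb cc then (1:ℝ) else 0)) r c =
      softmax ((WKm * L)ᵀ * (WQm * L)) r (emb c) := by
    rw [Matrix.mul_apply]
    simp only [Matrix.of_apply, mul_ite, mul_one, mul_zero,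
      Finset.sum_ite_eq', Finset.mem_univ, if_true]
  rw [hout]
  unfold softmax
  simp only [Matrix.of_apply, hA]
  exact softmax_key ε Δ lam hlam hexp
    (fun r' => (∑ t, a r' t * Xm t c) + b r') (jx c)
    (fun r' hr' => by
      show ((∑ t, a r' t * Xm t c) + b r') + Δ ≤ (∑ t, a (jx c) t * Xm t c) + b (jx c)
      have := hmargin c r' hr'; linarith) r
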